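/- (Deterministic clustering error bound from Lemma 3.) Let d ≥ 1, N ≥ 1, and let h : ℝ^d → ℝ satisfy |h(x) − h(x')| ≤ B'·‖x − x'‖₁ for all x, x' and some B' > 0. Let c and c* be finite nonempty index sets with |c| ≤ N and |c*| ≤ N, and for each index i let x_i ∈ ℝ^d have all entries nonnegative; write x̄_c and x̄_{c*} for the means of the vectors indexed by c and by c* respectively. Suppose there exist a vector y ∈ ℝ^d and constants 0 < V ≤ Z, δ > 0, Y > 0, P > 0, C'' > 0 such that: all entries of x̄_c and of y are positive with V ≤ (x̄_c)_j / y_j ≤ Z for every j; ⟨x̄_c, y⟩ ≤ δ; ‖y‖₂ ≥ Y; P ≤ ⟨x̄_c, x̄_{c*}⟩; and ‖x̄_{c*}‖₂² ≤ C''. Then for every i* ∈ c* and every i ∈ c, h(x_{i*}) − h(x_i) ≤ B'·( C''·Q·δ·√d·N/(P·Y) + N·Q·δ·√d/Y ), where Q = (V + Z)/(2√(V·Z)). -/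
import Mathlib


open Finset

set_option maxHeartbeats 1000000 in
/-- deterministic clustering error bound from Lemma 3:
with `h` being `B'`-Lipschitz in the `ℓ1` norm, `c` and `c*` finite nonempty
clusters of size at most `N` of nonnegative context vectors with means `x̄_c`
and `x̄_{c*}`, Kantorovich ratio bounds `V ≤ (x̄_c)_j / y_j ≤ Z`, separation
`⟨x̄_c, y⟩ ≤ δ`, `‖y‖₂ ≥ Y`, alignment `P ≤ ⟨x̄_c, x̄_{c*}⟩` and
`‖x̄_{c*}‖₂² ≤ C''`, we get for every `i* ∈ c*` and `i ∈ c` that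
`h (x i*) - h (x i) ≤ B' (C'' Q δ √d N / (P Y) + N Q δ √d / Y)` with
`Q = (V + Z)/(2√(VZ))`. -/
theorem clustering_error_bound {ι : Type*} (d N : ℕ) (hd : 1 ≤ d) (hN : 1 ≤ N)
    (h : (Fin d → ℝ) → ℝ) (B' : ℝ) (hB' : 0 < B')
    (hlip : ∀ u u' : Fin d → ℝ, |h u - h u'| ≤ B' * ∑ j, |u j - u' j|)
    (c cstar : Finset ι) (hc : c.Nonempty) (hcstar : cstar.Nonempty)
    (hcN : c.card ≤ N) (hcstarN : cstar.card ≤ N)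
    (x : ι → Fin d → ℝ) (hx : ∀ i, ∀ j, 0 ≤ x i j)
    (y : Fin d → ℝ) (V Z δ Y P C'' : ℝ)
    (hV : 0 < V) (hVZ : V ≤ Z) (hδ : 0 < δ) (hY : 0 < Y)
    (hP : 0 < P) (hC : 0 < C'')
    (hmeanpos : ∀ j, 0 < (c.card : ℝ)⁻¹ * ∑ i ∈ c, x i j)
    (hypos : ∀ j, 0 < y j)
    (hratio : ∀ j, V ≤ ((c.card : ℝ)⁻¹ * ∑ i ∈ c, x i j) / y j ∧
      ((c.card : ℝ)⁻¹ * ∑ i ∈ c, x i j) / y j ≤ Z)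
    (hdot : ∑ j, ((c.card : ℝ)⁻¹ * ∑ i ∈ c, x i j) * y j ≤ δ)
    (hynorm : Y ≤ Real.sqrt (∑ j, (y j) ^ 2))
    (halign : P ≤ ∑ j, ((c.card : ℝ)⁻¹ * ∑ i ∈ c, x i j) *
      ((cstar.card : ℝ)⁻¹ * ∑ i ∈ cstar, x i j))
    (hstarnorm : ∑ j, ((cstar.card : ℝ)⁻¹ * ∑ i ∈ cstar, x i j) ^ 2 ≤ C'') :
    ∀ istar ∈ cstar, ∀ i ∈ c,
      h (x istar) - h (x i) ≤
        B' * (C'' * ((V + Z) / (2 * Real.sqrt (V * Z))) * δ * Real.sqrt d * N / (P * Y)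
          + N * ((V + Z) / (2 * Real.sqrt (V * Z))) * δ * Real.sqrt d / Y) := by
  intro istar histar i hi
  set m : Fin d → ℝ := fun j => (c.card : ℝ)⁻¹ * ∑ i ∈ c, x i j with hm
  set ms : Fin d → ℝ := fun j => (cstar.card : ℝ)⁻¹ * ∑ i ∈ cstar, x i j with hms
  have hmsnn : ∀ j, 0 ≤ ms j := fun j =>
    mul_nonneg (by positivity) (Finset.sum_nonneg fun i _ => hx i j)
  set A := ∑ j, (m j) ^ 2 with hA
  set Bq := ∑ j, (y j) ^ 2 with hBq
  set As := ∑ j, (ms j) ^ 2 with hAs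
  set q := (V + Z) / (2 * Real.sqrt (V * Z)) with hq
  have hVZpos : 0 < V * Z := mul_pos hV (hV.trans_le hVZ)
  have hsVZ : 0 < Real.sqrt (V * Z) := Real.sqrt_pos.2 hVZpos
  have hsVZsq : Real.sqrt (V * Z) ^ 2 = V * Z := Real.sq_sqrt hVZpos.le
  have hqpos : 0 < q := by
    rw [hq]
    apply div_pos (by linarith) (by positivity)
  -- pointwise Kantorovich step
  have step1 : A + V * Z * Bq ≤ (V + Z) * (∑ j, m j * y j) := by
    rw [hA, hBq, Finset.mul_sum, Finset.mul_sum, ← Finset.sum_add_distrib]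
    refine Finset.sum_le_sum fun j _ => ?_
    have hy := hypos j
    have h1 : V * y j ≤ m j := (le_div_iff₀ hy).1 (hratio j).1
    have h2 : m j ≤ Z * y j := (div_le_iff₀ hy).1 (hratio j).2
    nlinarith [mul_nonneg (sub_nonneg.2 h1) (sub_nonneg.2 h2)]
  have hAnn : 0 ≤ A := Finset.sum_nonneg fun j _ => sq_nonneg _
  have hBnn : 0 ≤ Bq := Finset.sum_nonneg fun j _ => sq_nonneg _
  have hAsnn : 0 ≤ As := Finset.sum_nonneg fun j _ => sq_nonneg _
  have hAsq : Real.sqrt A ^ 2 = A := Real.sq_sqrt hAnn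
  have hBsq : Real.sqrt Bq ^ 2 = Bq := Real.sq_sqrt hBnn
  have hAssq : Real.sqrt As ^ 2 = As := Real.sq_sqrt hAsnn
  have hSpos : 0 < ∑ j, m j * y j := by
    have := hd
    refine Finset.sum_pos (fun j _ => mul_pos (hmeanpos j) (hypos j)) ?_
    exact Finset.univ_nonempty_iff.2 ⟨⟨0, hd⟩⟩
  have hSle : ∑ j, m j * y j ≤ δ := hdot
  -- Kantorovich: √A √Bq ≤ q * S
  have hkan : Real.sqrt A * Real.sqrt Bq ≤ q * (∑ j, m j * y j) := by
    have hamgm : 2 * Real.sqrt (V * Z) * (Real.sqrt A * Real.sqrt Bq)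
        ≤ A + V * Z * Bq := by
      nlinarith [sq_nonneg (Real.sqrt A - Real.sqrt (V * Z) * Real.sqrt Bq),
        Real.sqrt_nonneg A, Real.sqrt_nonneg Bq]
    rw [hq, div_mul_eq_mul_div, le_div_iff₀ (by positivity)]
    nlinarith [le_trans hamgm step1]
  -- bound on √A
  have hsBY : Y ≤ Real.sqrt Bq := hynorm
  have hsA_le : Real.sqrt A ≤ q * δ / Y := by
    rw [le_div_iff₀ hY]
    calc Real.sqrt A * Y ≤ Real.sqrt A * Real.sqrt Bq := by
          exact mul_le_mul_of_nonneg_left hsBY (Real.sqrt_nonneg A)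
      _ ≤ q * (∑ j, m j * y j) := hkan
      _ ≤ q * δ := by exact mul_le_mul_of_nonneg_left hSle hqpos.le
  -- Cauchy–Schwarz lower bound on √As
  have hcs : (∑ j, m j * ms j) ^ 2 ≤ A * As :=
    Finset.sum_mul_sq_le_sq_mul_sq _ _ _
  have hSnn2 : 0 ≤ ∑ j, m j * ms j :=
    Finset.sum_nonneg fun j _ => mul_nonneg (hmeanpos j).le (hmsnn j)
  have hPle : P ≤ Real.sqrt A * Real.sqrt As := by
    refine halign.trans ?_
    rw [← Real.sqrt_mul hAnn]
    exact (Real.le_sqrt hSnn2 (mul_nonneg hAnn hAsnn)).2 hcs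
  have hsAspos : 0 < Real.sqrt As := by
    rcases lt_or_ge 0 (Real.sqrt As) with h' | h'
    · exact h'
    · exfalso
      have : Real.sqrt As = 0 := le_antisymm h' (Real.sqrt_nonneg _)
      rw [this, mul_zero] at hPle; linarith
  have hsApos : 0 < Real.sqrt A := by
    rcases lt_or_ge 0 (Real.sqrt A) with h' | h'
    · exact h'
    · exfalso
      have : Real.sqrt A = 0 := le_antisymm h' (Real.sqrt_nonneg _)
      rw [this, zero_mul] at hPle; linarith
  have hsAs_lb : P * Y / (q * δ) ≤ Real.sqrt As := by
    rw [div_le_iff₀ (by positivity)]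
    calc P * Y ≤ (Real.sqrt A * Real.sqrt As) * Y :=
          mul_le_mul_of_nonneg_right hPle hY.le
      _ = Real.sqrt As * (Real.sqrt A * Y) := by ring
      _ ≤ Real.sqrt As * (q * δ) := by
          refine mul_le_mul_of_nonneg_left ?_ hsAspos.le
          calc Real.sqrt A * Y ≤ (q * δ / Y) * Y :=
                mul_le_mul_of_nonneg_right hsA_le hY.le
            _ = q * δ := by field_simp
  -- upper bound on √As
  have hsAs_ub : Real.sqrt As ≤ C'' * q * δ / (P * Y) := by
    have hPYle : P * Y ≤ Real.sqrt As * (q * δ) := (div_le_iff₀ (by positivity)).1 hsAs_lb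
    rw [le_div_iff₀ (by positivity)]
    calc Real.sqrt As * (P * Y) ≤ Real.sqrt As * (Real.sqrt As * (q * δ)) :=
          mul_le_mul_of_nonneg_left hPYle hsAspos.le
      _ = As * (q * δ) := by rw [← mul_assoc, Real.mul_self_sqrt hAsnn]
      _ ≤ C'' * (q * δ) := mul_le_mul_of_nonneg_right hstarnorm (by positivity)
      _ = C'' * q * δ := by ring
  -- ℓ1 bounds
  have hd1 : (0:ℝ) ≤ Real.sqrt d := Real.sqrt_nonneg _
  have hl1star : ∑ j, x istar j ≤ (N : ℝ) * Real.sqrt d * Real.sqrt As := by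
    have h1 : ∀ j, x istar j ≤ (N : ℝ) * ms j := by
      intro j
      have h2 : x istar j ≤ ∑ i ∈ cstar, x i j :=
        Finset.single_le_sum (fun i _ => hx i j) histar
      have h3 : (cstar.card : ℝ) * ms j = ∑ i ∈ cstar, x i j := by
        rw [hms]
        have : (cstar.card : ℝ) ≠ 0 := by
          exact_mod_cast (Finset.card_pos.2 hcstar).ne'
        field_simp
      have h4 : (cstar.card : ℝ) * ms j ≤ (N : ℝ) * ms j :=
        mul_le_mul_of_nonneg_right (by exact_mod_cast hcstarN) (hmsnn j)
      linarith
    have h5 : ∑ j, ms j ≤ Real.sqrt d * Real.sqrt As := by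
      have hcs2 : (∑ j, ms j) ^ 2 ≤ (d : ℝ) * As := by
        have := Finset.sum_mul_sq_le_sq_mul_sq Finset.univ (fun _ : Fin d => (1:ℝ)) ms
        simpa using this
      have hnn : 0 ≤ ∑ j, ms j := Finset.sum_nonneg fun j _ => hmsnn j
      rw [← Real.sqrt_mul (by positivity : (0:ℝ) ≤ (d:ℝ))]
      exact (Real.le_sqrt hnn (by positivity)).2 hcs2
    calc ∑ j, x istar j ≤ ∑ j, (N : ℝ) * ms j := Finset.sum_le_sum fun j _ => h1 j
      _ = (N : ℝ) * ∑ j, ms j := by rw [Finset.mul_sum]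
      _ ≤ (N : ℝ) * (Real.sqrt d * Real.sqrt As) :=
          mul_le_mul_of_nonneg_left h5 (by positivity)
      _ = (N : ℝ) * Real.sqrt d * Real.sqrt As := by ring
  have hl1c : ∑ j, x i j ≤ (N : ℝ) * Real.sqrt d * Real.sqrt A := by
    have h1 : ∀ j, x i j ≤ (N : ℝ) * m j := by
      intro j
      have h2 : x i j ≤ ∑ i' ∈ c, x i' j :=
        Finset.single_le_sum (fun i' _ => hx i' j) hi
      have h3 : (c.card : ℝ) * m j = ∑ i' ∈ c, x i' j := by
        rw [hm]
        have : (c.card : ℝ) ≠ 0 := by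
          exact_mod_cast (Finset.card_pos.2 hc).ne'
        field_simp
      have h4 : (c.card : ℝ) * m j ≤ (N : ℝ) * m j :=
        mul_le_mul_of_nonneg_right (by exact_mod_cast hcN) (hmeanpos j).le
      linarith
    have h5 : ∑ j, m j ≤ Real.sqrt d * Real.sqrt A := by
      have hcs2 : (∑ j, m j) ^ 2 ≤ (d : ℝ) * A := by
        have := Finset.sum_mul_sq_le_sq_mul_sq Finset.univ (fun _ : Fin d => (1:ℝ)) m
        simpa using this
      have hnn : 0 ≤ ∑ j, m j := Finset.sum_nonneg fun j _ => (hmeanpos j).le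
      rw [← Real.sqrt_mul (by positivity : (0:ℝ) ≤ (d:ℝ))]
      exact (Real.le_sqrt hnn (by positivity)).2 hcs2
    calc ∑ j, x i j ≤ ∑ j, (N : ℝ) * m j := Finset.sum_le_sum fun j _ => h1 j
      _ = (N : ℝ) * ∑ j, m j := by rw [Finset.mul_sum]
      _ ≤ (N : ℝ) * (Real.sqrt d * Real.sqrt A) :=
          mul_le_mul_of_nonneg_left h5 (by positivity)
      _ = (N : ℝ) * Real.sqrt d * Real.sqrt A := by ring
  -- combine
  have hstep : h (x istar) - h (x i) ≤ B' * (∑ j, x istar j + ∑ j, x i j) := by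
    calc h (x istar) - h (x i) ≤ |h (x istar) - h (x i)| := le_abs_self _
      _ ≤ B' * ∑ j, |x istar j - x i j| := hlip _ _
      _ ≤ B' * (∑ j, x istar j + ∑ j, x i j) := by
          refine mul_le_mul_of_nonneg_left ?_ hB'.le
          rw [← Finset.sum_add_distrib]
          refine Finset.sum_le_sum fun j _ => ?_
          have := hx istar j; have := hx i j
          rw [abs_sub_le_iff] at *
          constructor <;> [skip; skip] <;> linarith [abs_nonneg (x istar j - x i j)]
  have hT1 : ∑ j, x istar j ≤ C'' * q * δ * Real.sqrt d * N / (P * Y) := by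
    calc ∑ j, x istar j ≤ (N : ℝ) * Real.sqrt d * Real.sqrt As := hl1star
      _ ≤ (N : ℝ) * Real.sqrt d * (C'' * q * δ / (P * Y)) := by
          exact mul_le_mul_of_nonneg_left hsAs_ub (by positivity)
      _ = C'' * q * δ * Real.sqrt d * N / (P * Y) := by ring
  have hT2 : ∑ j, x i j ≤ (N : ℝ) * q * δ * Real.sqrt d / Y := by
    calc ∑ j, x i j ≤ (N : ℝ) * Real.sqrt d * Real.sqrt A := hl1c
      _ ≤ (N : ℝ) * Real.sqrt d * (q * δ / Y) := by
          exact mul_le_mul_of_nonneg_left hsA_le (by positivity)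
      _ = (N : ℝ) * q * δ * Real.sqrt d / Y := by ring
  calc h (x istar) - h (x i) ≤ B' * (∑ j, x istar j + ∑ j, x i j) := hstep
    _ ≤ B' * (C'' * q * δ * Real.sqrt d * N / (P * Y)
          + (N : ℝ) * q * δ * Real.sqrt d / Y) := by
        exact mul_le_mul_of_nonneg_left (add_le_add hT1 hT2) hB'.le
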